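/- Let Σ ∈ ℝ^{p×p} be symmetric positive semidefinite, t ≥ 0, and β ∈ ℝ^p. Then ‖Σ^{1/2}·exp(−tΣ)·β‖₂ ≤ ‖Σ^{1/2}·(I_p + tΣ)⁻¹·β‖₂, where exp(−tΣ) is the matrix exponential and (I_p + tΣ)⁻¹ exists since I_p + tΣ is positive definite. Consequently, for any linear regression problem (Σ, β*, σ_ξ), any t ≥ 1 and any b > 0, the rate of gradient flow is at most the rate of ridge regression: r^{GF}(V_{J*},V_{J*ᶜ}) ≤ r^{Ridge}(V_{J*},V_{J*ᶜ}), where r^{GF} is the rate with residual function ψ_t^{GF}(x) = exp(−tx) and r^{Ridge} is the rate with residual function ψ_t^{Ridge}(x) = 1/(xt + 1). -/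

import Mathlib

open Matrix

namespace SpecFSD4

noncomputable def l2norm {n : ℕ} (v : Fin n → ℝ) : ℝ := Real.sqrt (∑ i, v i ^ 2)

def ONFamily {p : ℕ} (e : Fin p → Fin p → ℝ) : Prop :=
  (∀ j, ∑ i, e j i * e j i = 1) ∧ ∀ j k, j ≠ k → ∑ i, e j i * e k i = 0

noncomputable def specMat {p : ℕ} (e : Fin p → Fin p → ℝ) (c : Fin p → ℝ) :
    Matrix (Fin p) (Fin p) ℝ :=
  ∑ j, c j • Matrix.vecMulVec (e j) (e j)

/-- Estimation dimension: `k* = min{k ∈ {1,…,p} : σ_{k+1} ≤ thr}` (with `σ_{p+1} := 0`,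
eigenvalues 1-indexed, `σv` 0-indexed). -/
def IsEstimationDim (p : ℕ) (σv : Fin p → ℝ) (thr : ℝ) (k : ℕ) : Prop :=
  IsLeast {k : ℕ | 1 ≤ k ∧ k ≤ p ∧ ∀ h : k < p, σv ⟨k, h⟩ ≤ thr} k

/-- The rate `r^ψ(V_{J*},V_{J*ᶜ})` associated with a residual function `ψ`:
`‖Σ_{J*}^{1/2}ψ(Σ)β*_{J*}‖₂ + σ_ξ√(k*/N) + ‖Σ_{J*ᶜ}^{1/2}β*_{J*ᶜ}‖₂
  + σ_ξ t √(Tr(Σ_{J*ᶜ}²)/N)`. -/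
noncomputable def rate {p : ℕ} (N : ℕ) (e : Fin p → Fin p → ℝ) (σv : Fin p → ℝ)
    (ψ : ℝ → ℝ) (k : ℕ) (β : Fin p → ℝ) (σξ t : ℝ) : ℝ :=
  l2norm ((specMat e fun j => if (j : ℕ) < k then Real.sqrt (σv j) else 0).mulVec
      ((specMat e fun j => ψ (σv j)).mulVec
        ((specMat e fun j => if (j : ℕ) < k then 1 else 0).mulVec β)))
    + σξ * Real.sqrt ((k : ℝ) / N)
    + l2norm ((specMat e fun j => if (j : ℕ) < k then 0 else Real.sqrt (σv j)).mulVec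
        ((specMat e fun j => if (j : ℕ) < k then 0 else 1).mulVec β))
    + σξ * t * Real.sqrt (Matrix.trace
        ((specMat e fun j => if (j : ℕ) < k then 0 else σv j) *
          (specMat e fun j => if (j : ℕ) < k then 0 else σv j)) / N)

section Aux
variable {p : ℕ} {e : Fin p → Fin p → ℝ}

noncomputable def dotE (e : Fin p → Fin p → ℝ) (j : Fin p) (β : Fin p → ℝ) : ℝ :=
  ∑ i, e j i * β i

lemma specMat_apply (c : Fin p → ℝ) (i i' : Fin p) :
    specMat e c i i' = ∑ j, c j * (e j i * e j i') := by
  simp [specMat, Matrix.sum_apply, vecMulVec_apply, mul_assoc]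

lemma specMat_mulVec (c : Fin p → ℝ) (β : Fin p → ℝ) (i : Fin p) :
    (specMat e c).mulVec β i = ∑ j, (c j * dotE e j β) * e j i := by
  simp only [mulVec, dotProduct, specMat_apply, Finset.sum_mul]
  rw [Finset.sum_comm]
  refine Finset.sum_congr rfl fun j _ => ?_
  rw [dotE, Finset.mul_sum, Finset.sum_mul]
  exact Finset.sum_congr rfl fun i' _ => by ring

lemma sum_coef (h : ONFamily e) (a : Fin p → ℝ) (k : Fin p) :
    ∑ i, e k i * (∑ j, a j * e j i) = a k := by
  have : ∀ i, e k i * (∑ j, a j * e j i) = ∑ j, a j * (e k i * e j i) := by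
    intro i; rw [Finset.mul_sum]; exact Finset.sum_congr rfl fun j _ => by ring
  simp only [this]
  rw [Finset.sum_comm]
  rw [Finset.sum_eq_single k]
  · rw [← Finset.mul_sum, h.1 k, mul_one]
  · intro j _ hj
    rw [← Finset.mul_sum, h.2 k j (Ne.symm hj), mul_zero]
  · intro hk; exact absurd (Finset.mem_univ k) hk

lemma sum_sq_coef (h : ONFamily e) (a : Fin p → ℝ) :
    ∑ i, (∑ j, a j * e j i) ^ 2 = ∑ j, a j ^ 2 := by
  have step : ∀ i, (∑ j, a j * e j i) ^ 2
      = ∑ j, a j * (e j i * (∑ k, a k * e k i)) := by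
    intro i
    rw [sq, Finset.sum_mul]
    exact Finset.sum_congr rfl fun j _ => by ring
  simp only [step]
  rw [Finset.sum_comm]
  refine Finset.sum_congr rfl fun j _ => ?_
  rw [← Finset.mul_sum, sum_coef h a j, sq]

lemma dot_specMat (h : ONFamily e) (c : Fin p → ℝ) (β : Fin p → ℝ) (k : Fin p) :
    dotE e k ((specMat e c).mulVec β) = c k * dotE e k β := by
  rw [dotE]
  simp only [specMat_mulVec]
  exact sum_coef h (fun j => c j * dotE e j β) k

lemma l2norm_specMat (h : ONFamily e) (c : Fin p → ℝ) (β : Fin p → ℝ) :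
    l2norm ((specMat e c).mulVec β) = Real.sqrt (∑ j, (c j * dotE e j β) ^ 2) := by
  unfold l2norm
  congr 1
  simp only [specMat_mulVec]
  exact sum_sq_coef h _

lemma specMat_mulVec_specMat (h : ONFamily e) (c d : Fin p → ℝ) (β : Fin p → ℝ) :
    (specMat e c).mulVec ((specMat e d).mulVec β)
      = (specMat e (fun j => c j * d j)).mulVec β := by
  funext i
  simp only [specMat_mulVec]
  refine Finset.sum_congr rfl fun j _ => ?_
  rw [dot_specMat h]; ring_nf

end Aux

section Aux2
variable {p : ℕ} {e : Fin p → Fin p → ℝ}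

lemma entry_eq_mulVec_single (M : Matrix (Fin p) (Fin p) ℝ) (i i' : Fin p) :
    M i i' = M.mulVec (Pi.single i' 1) i := by
  simp [Matrix.mulVec_single]

lemma specMat_one (h : ONFamily e) : specMat e (fun _ => (1 : ℝ)) = 1 := by
  have hE : (Matrix.of e) * (Matrix.of e)ᵀ = 1 := by
    ext j k
    by_cases hjk : j = k
    · subst hjk; simp [Matrix.mul_apply, h.1 j]
    · simp [Matrix.mul_apply, h.2 j k hjk, hjk]
  have hE' : (Matrix.of e)ᵀ * (Matrix.of e) = 1 := mul_eq_one_comm.mp hE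
  calc specMat e (fun _ => (1:ℝ)) = (Matrix.of e)ᵀ * (Matrix.of e) := by
        ext i i'
        rw [specMat_apply, Matrix.mul_apply]
        simp
    _ = 1 := hE'

lemma specMat_mul (h : ONFamily e) (c d : Fin p → ℝ) :
    specMat e c * specMat e d = specMat e (fun j => c j * d j) := by
  ext i i'
  rw [entry_eq_mulVec_single (specMat e c * specMat e d),
    entry_eq_mulVec_single (specMat e (fun j => c j * d j)), ← Matrix.mulVec_mulVec,
    specMat_mulVec_specMat h]

lemma specMat_resolvent (h : ONFamily e) (σv : Fin p → ℝ) (t : ℝ)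
    (hpos : ∀ j, 0 < 1 + t * σv j) :
    (1 + t • specMat e σv)⁻¹ = specMat e (fun j => (1 + t * σv j)⁻¹) := by
  have h1 : 1 + t • specMat e σv = specMat e (fun j => 1 + t * σv j) := by
    rw [← specMat_one h]
    unfold specMat
    rw [Finset.smul_sum, ← Finset.sum_add_distrib]
    refine Finset.sum_congr rfl fun j _ => ?_
    rw [smul_smul, ← add_smul]
  rw [h1]
  apply Matrix.inv_eq_right_inv
  rw [specMat_mul h, ← specMat_one h]
  exact congrArg (specMat e) (funext fun j => mul_inv_cancel₀ (ne_of_gt (hpos j)))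

lemma l2norm_le (h : ONFamily e) {c d : Fin p → ℝ} (β : Fin p → ℝ)
    (hcd : ∀ j, |c j| ≤ |d j|) :
    l2norm ((specMat e c).mulVec β) ≤ l2norm ((specMat e d).mulVec β) := by
  rw [l2norm_specMat h, l2norm_specMat h]
  apply Real.sqrt_le_sqrt
  refine Finset.sum_le_sum fun j _ => ?_
  rw [mul_pow, mul_pow, ← sq_abs (c j), ← sq_abs (d j)]
  exact mul_le_mul_of_nonneg_right (pow_le_pow_left₀ (abs_nonneg _) (hcd j) 2) (sq_nonneg _)

lemma exp_le_ridge {x t : ℝ} (hx : 0 ≤ x) (ht : 0 ≤ t) :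
    Real.exp (-(t * x)) ≤ (x * t + 1)⁻¹ := by
  rw [Real.exp_neg]
  apply inv_anti₀
  · positivity
  · rw [mul_comm x t]; linarith [Real.add_one_le_exp (t * x)]

end Aux2

/-- (a) for every symmetric PSD `Σ = ∑ σ_j e_j e_jᵀ`, `t ≥ 0` and `β`,
`‖Σ^{1/2} exp(−tΣ) β‖₂ ≤ ‖Σ^{1/2}(I + tΣ)⁻¹ β‖₂`; (b) consequently, for any linear
regression problem, any `t ≥ 1` and any `b > 0`, the gradient-flow rate is at most the
ridge rate: `r^{GF}(V_{J*},V_{J*ᶜ}) ≤ r^{Ridge}(V_{J*},V_{J*ᶜ})`, where `r^{GF}` uses the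
residual `ψ^{GF}(x) = exp(−tx)` and `r^{Ridge}` uses `ψ^{Ridge}(x) = 1/(xt+1)`. -/
theorem gradient_flow_beats_ridge :
    (∀ (p : ℕ) (e : Fin p → Fin p → ℝ) (σv : Fin p → ℝ) (t : ℝ) (β : Fin p → ℝ),
      ONFamily e → (∀ j, 0 ≤ σv j) → 0 ≤ t →
      l2norm ((specMat e fun j => Real.sqrt (σv j)).mulVec
          ((specMat e fun j => Real.exp (-(t * σv j))).mulVec β)) ≤
        l2norm ((specMat e fun j => Real.sqrt (σv j)).mulVec
          (((1 + t • specMat e σv)⁻¹).mulVec β))) ∧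
    (∀ (p N : ℕ) (e : Fin p → Fin p → ℝ) (σv : Fin p → ℝ) (βstar : Fin p → ℝ)
        (σξ t b : ℝ) (kstar : ℕ),
      ONFamily e → (∀ j, 0 < σv j) → (∀ j k : Fin p, j ≤ k → σv k ≤ σv j) →
      0 < σξ → 1 ≤ t → 0 < b →
      IsEstimationDim p σv (b * t⁻¹) kstar →
      rate N e σv (fun x => Real.exp (-(t * x))) kstar βstar σξ t ≤
        rate N e σv (fun x => (x * t + 1)⁻¹) kstar βstar σξ t) := by
  constructor
  · intro p e σv t β h hσ ht
    rw [specMat_mulVec_specMat h,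
      specMat_resolvent h σv t (fun j => by nlinarith [mul_nonneg ht (hσ j)]),
      specMat_mulVec_specMat h]
    refine l2norm_le h β fun j => ?_
    rw [abs_mul, abs_mul]
    refine mul_le_mul_of_nonneg_left ?_ (abs_nonneg _)
    rw [abs_of_nonneg (Real.exp_pos _).le,
      abs_of_nonneg (inv_nonneg.mpr (by nlinarith [mul_nonneg ht (hσ j)]))]
    calc Real.exp (-(t * σv j)) ≤ (σv j * t + 1)⁻¹ := exp_le_ridge (hσ j) ht
      _ = (1 + t * σv j)⁻¹ := by rw [mul_comm, add_comm]
  · intro p N e σv βstar σξ t b kstar h hσ _ _ ht _ _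
    have ht0 : (0:ℝ) ≤ t := le_trans zero_le_one ht
    unfold rate
    refine add_le_add_left (add_le_add_left (add_le_add_left ?_ _) _) _
    rw [specMat_mulVec_specMat h (fun j => Real.exp (-(t * σv j))),
      specMat_mulVec_specMat h,
      specMat_mulVec_specMat h (fun j => (σv j * t + 1)⁻¹),
      specMat_mulVec_specMat h]
    refine l2norm_le h βstar fun j => ?_
    rw [abs_mul, abs_mul, abs_mul, abs_mul]
    refine mul_le_mul_of_nonneg_left
      (mul_le_mul_of_nonneg_right ?_ (abs_nonneg _)) (abs_nonneg _)
    rw [abs_of_nonneg (Real.exp_pos _).le,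
      abs_of_nonneg (inv_nonneg.mpr (by nlinarith [(hσ j).le]))]
    exact exp_le_ridge (hσ j).le ht0


end SpecFSD4
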